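/- A function ζ: Λ → Q(q)× satisfying ζ(μ + α_i) = -q^{(α_i, μ+α_i) - (α_{-i}, μ)}ζ(μ) and ζ(μ + α_{-i}) = -q^{(α_{-i}, μ+α_{-i}) - (α_i, μ) - 1}ζ(μ) for all μ ∈ Λ and i ∈ I^ι (and, in the odd case, ζ(μ + α_0) = -qζ(μ)) exists. -/

import Mathlib

noncomputable section

/-- The field `ℚ(q)`; the parameter `q` is `RatFunc.X`. -/
abbrev Kq : Type := RatFunc ℚ

/-- The weight lattice `Λ = ⊕_a ℤ ε_a`, indices in `ℚ`. -/
abbrev Lam : Type := ℚ →₀ ℤ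

/-- The basis vector `ε_a` of `Λ`. -/
def eps (a : ℚ) : Lam := Finsupp.single a 1

/-- The simple root `α_i = ε_{i-1/2} - ε_{i+1/2}`. -/
def alpha (i : ℚ) : Lam := eps (i - 1/2) - eps (i + 1/2)

/-- The standard bilinear form with `(ε_a, ε_b) = δ_{ab}`. -/
def Bform (x y : Lam) : ℤ := x.sum fun a c => c * y a

namespace S19

lemma Bform_add_left (x y z : Lam) : Bform (x + y) z = Bform x z + Bform y z := by
  unfold Bform
  exact Finsupp.sum_add_index' (by simp) (fun _ _ _ => by ring)

lemma Bform_zero_left (z : Lam) : Bform 0 z = 0 := by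
  unfold Bform; exact Finsupp.sum_zero_index

/-- `Bform · y` as an additive hom. -/
def BformHom (y : Lam) : Lam →+ ℤ where
  toFun x := Bform x y
  map_zero' := Bform_zero_left y
  map_add' x₁ x₂ := Bform_add_left x₁ x₂ y

lemma Bform_neg_left (x z : Lam) : Bform (-x) z = -Bform x z :=
  (BformHom z).map_neg x

lemma Bform_sub_left (x y z : Lam) : Bform (x - y) z = Bform x z - Bform y z :=
  (BformHom z).map_sub x y

lemma Bform_single_left (a : ℚ) (n : ℤ) (y : Lam) :
    Bform (Finsupp.single a n) y = n * y a := by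
  unfold Bform
  exact Finsupp.sum_single_index (by simp)

lemma Bform_single_right (y : Lam) (a : ℚ) (n : ℤ) :
    Bform y (Finsupp.single a n) = y a * n := by
  classical
  unfold Bform Finsupp.sum
  simp only [Finsupp.single_apply, mul_ite, mul_zero]
  rw [Finset.sum_ite_eq]
  split_ifs with h
  · rfl
  · rw [Finsupp.notMem_support_iff.mp h, zero_mul]

lemma Bform_comm (x y : Lam) : Bform x y = Bform y x := by
  induction x using Finsupp.induction_linear with
  | zero =>
      rw [Bform_zero_left]
      unfold Bform
      simp
  | add f g hf hg =>
      rw [Bform_add_left, hf, hg]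
      unfold Bform
      simp [Finsupp.add_apply, mul_add, Finsupp.sum_add]
  | single a n => rw [Bform_single_left, Bform_single_right, mul_comm]

lemma Bform_add_right (x y z : Lam) : Bform x (y + z) = Bform x y + Bform x z := by
  rw [Bform_comm, Bform_add_left, Bform_comm y x, Bform_comm z x]

lemma Bform_neg_right (x z : Lam) : Bform x (-z) = -Bform x z := by
  rw [Bform_comm, Bform_neg_left, Bform_comm]

/-- The involution `τ : ε_a ↦ ε_{-a}`. -/
def tau : Lam ≃+ Lam := Finsupp.domCongr (Equiv.neg ℚ)

lemma tau_single (a : ℚ) (n : ℤ) : tau (Finsupp.single a n) = Finsupp.single (-a) n := by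
  simp [tau, Finsupp.domCongr_apply, Finsupp.equivMapDomain_single]

lemma tau_apply (μ : Lam) (a : ℚ) : tau μ a = μ (-a) := by
  simp [tau, Finsupp.domCongr_apply, Finsupp.equivMapDomain_apply]

lemma Bform_tau (x y : Lam) : Bform (tau x) y = Bform x (tau y) := by
  induction x using Finsupp.induction_linear with
  | zero => rw [map_zero, Bform_zero_left, Bform_zero_left]
  | add f g hf hg => rw [map_add, Bform_add_left, Bform_add_left, hf, hg]
  | single a n =>
      rw [tau_single, Bform_single_left, Bform_single_left, tau_apply]

/-- The linear correction `ℓ`. -/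
def ell (a : ℚ) : ℚ :=
  -((max ⌊a + 1/2⌋ 0 : ℤ) : ℚ) + (if 1 ≤ a ∧ ((⌊a⌋ : ℚ) = a) then (1:ℚ) else 0)
    + (if a = 0 then (1/2 : ℚ) else 0)

lemma ell_step (a : ℚ) : ell a - ell (a + 1) =
    (if (-(1:ℚ)/2) ≤ a then (1:ℚ) else 0) - (if a = 0 then (1/2:ℚ) else 0)
      - (if a = -1 then (1/2:ℚ) else 0) := by
  have h1 : ⌊a + 1 + 1/2⌋ = ⌊a + 1/2⌋ + 1 := by
    rw [show a + 1 + 1/2 = (a + 1/2) + 1 by ring, Int.floor_add_one]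
  have h2 : ⌊a + 1⌋ = ⌊a⌋ + 1 := Int.floor_add_one a
  have hflo : (0 ≤ ⌊a + 1/2⌋) ↔ (-(1:ℚ)/2) ≤ a := by
    rw [Int.le_floor]; push_cast; constructor <;> intro <;> linarith
  have hmax : ((max (⌊a + 1/2⌋ + 1) 0 : ℤ) : ℚ)
      = ((max ⌊a + 1/2⌋ 0 : ℤ) : ℚ) + (if (-(1:ℚ)/2) ≤ a then 1 else 0) := by
    rcases le_or_gt 0 ⌊a + 1/2⌋ with h | h
    · rw [if_pos (hflo.mp h), max_eq_left (by omega), max_eq_left h]; push_cast; ring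
    · rw [if_neg (fun hc => absurd (hflo.mpr hc) (not_le.mpr h)),
        max_eq_right (by omega), max_eq_right (by omega)]
      norm_num
  have hcond : (1 ≤ a + 1 ∧ ((⌊a + 1⌋ : ℚ) = a + 1)) ↔ (0 ≤ a ∧ ((⌊a⌋ : ℚ) = a)) := by
    rw [h2]; push_cast; constructor <;> rintro ⟨h, h'⟩ <;> constructor <;> linarith
  have hPQ : (if 1 ≤ a ∧ ((⌊a⌋:ℚ) = a) then (1:ℚ) else 0)
      = (if 0 ≤ a ∧ ((⌊a⌋:ℚ) = a) then (1:ℚ) else 0) - (if a = 0 then (1:ℚ) else 0) := by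
    by_cases h0 : a = 0
    · subst h0; norm_num
    · rw [if_neg h0, sub_zero]
      have hiff : (1 ≤ a ∧ ((⌊a⌋:ℚ) = a)) ↔ (0 ≤ a ∧ ((⌊a⌋:ℚ) = a)) := by
        constructor
        · rintro ⟨h, h'⟩; exact ⟨by linarith, h'⟩
        · rintro ⟨h, h'⟩
          refine ⟨?_, h'⟩
          have h1a : (1:ℤ) ≤ ⌊a⌋ := by
            have hz : (0:ℤ) ≤ ⌊a⌋ := by rw [Int.le_floor]; exact_mod_cast h
            rcases hz.lt_or_eq with hlt | heq
            · omega
            · exfalso; apply h0; rw [← h', ← heq]; norm_num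
          calc (1:ℚ) = ((1:ℤ):ℚ) := by norm_num
            _ ≤ (⌊a⌋ : ℚ) := by exact_mod_cast h1a
            _ = a := h'
      simp only [hiff]
  have hm1 : (a + 1 = 0) ↔ (a = -1) := by constructor <;> intro <;> linarith
  unfold ell
  rw [h1, hmax]
  simp only [hcond, hm1]
  rw [hPQ]
  split_ifs <;> ring

/-- The linear part of the exponent. -/
def Lfun (μ : Lam) : ℚ := μ.sum fun a c => (c : ℚ) * ell a

lemma Lfun_add (x y : Lam) : Lfun (x + y) = Lfun x + Lfun y := by
  unfold Lfun
  exact Finsupp.sum_add_index' (by simp) (fun _ _ _ => by push_cast; ring)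

lemma Lfun_zero : Lfun 0 = 0 := by
  unfold Lfun; exact Finsupp.sum_zero_index

def LHom : Lam →+ ℚ where
  toFun := Lfun
  map_zero' := Lfun_zero
  map_add' := Lfun_add

lemma Lfun_single (a : ℚ) (n : ℤ) : Lfun (Finsupp.single a n) = (n : ℚ) * ell a := by
  unfold Lfun
  exact Finsupp.sum_single_index (by simp)

lemma Lfun_sub (x y : Lam) : Lfun (x - y) = Lfun x - Lfun y := LHom.map_sub x y

/-- The sign exponent. -/
def tfun (μ : Lam) : ℤ := μ.sum fun a c => c * ⌊a⌋

lemma tfun_add (x y : Lam) : tfun (x + y) = tfun x + tfun y := by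
  unfold tfun
  exact Finsupp.sum_add_index' (by simp) (fun _ _ _ => by ring)

lemma tfun_zero : tfun 0 = 0 := by
  unfold tfun; exact Finsupp.sum_zero_index

def tHom : Lam →+ ℤ where
  toFun := tfun
  map_zero' := tfun_zero
  map_add' := tfun_add

lemma tfun_single (a : ℚ) (n : ℤ) : tfun (Finsupp.single a n) = n * ⌊a⌋ := by
  unfold tfun
  exact Finsupp.sum_single_index (by simp)

lemma tfun_sub (x y : Lam) : tfun (x - y) = tfun x - tfun y := tHom.map_sub x y

lemma tfun_alpha (i : ℚ) : tfun (alpha i) = -1 := by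
  unfold alpha eps
  rw [tfun_sub, tfun_single, tfun_single,
    show i + 1/2 = (i - 1/2) + 1 by ring, Int.floor_add_one]
  ring

/-- The exponent of `q`. -/
def Efun (μ : Lam) : ℚ :=
  (((Bform μ μ : ℤ) : ℚ) + ((Bform μ (tau μ) : ℤ) : ℚ)) / 2 + Lfun μ

lemma Efun_add (μ β : Lam) :
    Efun (μ + β) = Efun μ + ((Bform β μ : ℤ) : ℚ) + ((Bform (tau β) μ : ℤ) : ℚ)
      + (((Bform β β : ℤ) : ℚ) + ((Bform β (tau β) : ℤ) : ℚ)) / 2 + Lfun β := by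
  have e1 : Bform (μ + β) (μ + β) = Bform μ μ + 2 * Bform β μ + Bform β β := by
    rw [Bform_add_left, Bform_add_right, Bform_add_right, Bform_comm μ β]; ring
  have e2 : Bform (μ + β) (tau (μ + β))
      = Bform μ (tau μ) + 2 * Bform (tau β) μ + Bform β (tau β) := by
    rw [map_add, Bform_add_left, Bform_add_right, Bform_add_right,
      Bform_comm μ (tau β), ← Bform_tau β μ, Bform_comm (tau β) μ]
    ring
  unfold Efun
  rw [e1, e2, Lfun_add]
  push_cast
  ring

lemma tau_alpha (i : ℚ) : tau (alpha i) = -(alpha (-i)) := by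
  unfold alpha eps
  rw [map_sub, tau_single, tau_single,
    show -(i - 1/2) = -i + 1/2 by ring, show -(i + 1/2) = -i - 1/2 by ring]
  abel

lemma alpha_self (i : ℚ) : Bform (alpha i) (alpha i) = 2 := by
  unfold alpha eps
  rw [Bform_sub_left, Bform_single_left, Bform_single_left]
  simp only [Finsupp.sub_apply, Finsupp.single_apply]
  split_ifs <;> linarith

lemma alpha_pair (i : ℚ) (hi : 0 < i) :
    Bform (alpha i) (alpha (-i)) = if i = 1/2 then -1 else 0 := by
  unfold alpha eps
  rw [Bform_sub_left, Bform_single_left, Bform_single_left]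
  simp only [Finsupp.sub_apply, Finsupp.single_apply]
  by_cases h : i = 1/2
  · subst h; norm_num
  · rw [if_neg h]
    split_ifs with hA hB hC hD <;>
      first
        | linarith
        | (exfalso; apply h; linarith)

lemma Lfun_alpha (i : ℚ) : Lfun (alpha i) = ell (i - 1/2) - ell (i + 1/2) := by
  unfold alpha eps
  rw [Lfun_sub, Lfun_single, Lfun_single, Int.cast_one, one_mul, one_mul]

lemma Efun_step_pos (μ : Lam) (i : ℚ) (hi : 0 < i) :
    Efun (μ + alpha i)
      = Efun μ + ((Bform (alpha i) (μ + alpha i) - Bform (alpha (-i)) μ : ℤ) : ℚ) := by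
  rw [Efun_add, tau_alpha, Bform_neg_left, Bform_neg_right, alpha_pair i hi, alpha_self]
  rw [show Bform (alpha i) (μ + alpha i) = Bform (alpha i) μ + 2 by
    rw [Bform_add_right, alpha_self]]
  have hL : Lfun (alpha i) = 1 - (if i = 1/2 then (1/2:ℚ) else 0) := by
    rw [Lfun_alpha]
    have hstep := ell_step (i - 1/2)
    rw [show i - 1/2 + 1 = i + 1/2 by ring] at hstep
    rw [hstep, if_pos (show (-(1:ℚ)/2) ≤ i - 1/2 by linarith),
      if_neg (show ¬ (i - 1/2 = -1) by intro h; linarith)]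
    by_cases hc : i = 1/2
    · subst hc; norm_num
    · rw [if_neg (fun h => hc (by linarith)), if_neg hc]; ring
  rw [hL]
  push_cast
  split_ifs <;> ring

lemma Efun_step_neg (μ : Lam) (i : ℚ) (hi : 0 < i) :
    Efun (μ + alpha (-i))
      = Efun μ + ((Bform (alpha (-i)) (μ + alpha (-i)) - Bform (alpha i) μ - 1 : ℤ) : ℚ) := by
  rw [Efun_add]
  rw [show tau (alpha (-i)) = -(alpha i) by rw [tau_alpha, neg_neg]]
  rw [Bform_neg_left, Bform_neg_right, alpha_self]
  rw [show Bform (alpha (-i)) (alpha i) = if i = 1/2 then -1 else 0 by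
    rw [Bform_comm, alpha_pair i hi]]
  rw [show Bform (alpha (-i)) (μ + alpha (-i)) = Bform (alpha (-i)) μ + 2 by
    rw [Bform_add_right, alpha_self]]
  have hL : Lfun (alpha (-i)) = -(if i = 1/2 then (1/2:ℚ) else 0) := by
    rw [Lfun_alpha]
    have hstep := ell_step (-i - 1/2)
    rw [show -i - 1/2 + 1 = -i + 1/2 by ring] at hstep
    rw [show -i - 1/2 = (-i) - 1/2 by ring] at *
    rw [hstep, if_neg (show ¬ ((-(1:ℚ)/2) ≤ -i - 1/2) by intro h; linarith),
      if_neg (show ¬ ((-i - 1/2 : ℚ) = 0) by intro h; linarith)]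
    by_cases hc : i = 1/2
    · subst hc; norm_num
    · rw [if_neg (fun h => hc (by linarith)), if_neg hc]; ring
  rw [hL]
  push_cast
  split_ifs <;> ring

lemma Efun_step_zero (μ : Lam) :
    Efun (μ + alpha 0) = Efun μ + ((1 : ℤ) : ℚ) := by
  rw [Efun_add]
  rw [show tau (alpha 0) = -(alpha 0) by rw [tau_alpha, neg_zero]]
  rw [Bform_neg_left, Bform_neg_right, alpha_self]
  have hL : Lfun (alpha 0) = 1 := by
    rw [Lfun_alpha]
    have hstep := ell_step (0 - 1/2)
    rw [show (0:ℚ) - 1/2 + 1 = 0 + 1/2 by ring] at hstep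
    rw [hstep]
    norm_num
  rw [hL]
  push_cast
  ring

/-- The function `ζ`. -/
def zeta (μ : Lam) : Kq :=
  (-1 : Kq) ^ (tfun μ) * (RatFunc.X : Kq) ^ (⌊Efun μ⌋)

lemma zeta_ne_zero (μ : Lam) : zeta μ ≠ 0 :=
  mul_ne_zero (zpow_ne_zero _ (neg_ne_zero.mpr one_ne_zero))
    (zpow_ne_zero _ RatFunc.X_ne_zero)

lemma zeta_step (μ β : Lam) (d : ℤ) (hE : Efun (μ + β) = Efun μ + (d : ℚ))
    (ht : tfun β = -1) :
    zeta (μ + β) = -(RatFunc.X : Kq) ^ d * zeta μ := by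
  unfold zeta
  rw [tfun_add, ht, hE, Int.floor_add_intCast,
    zpow_add₀ (neg_ne_zero.mpr (one_ne_zero : (1:Kq) ≠ 0)),
    zpow_add₀ (RatFunc.X_ne_zero : (RatFunc.X : Kq) ≠ 0),
    zpow_neg_one, inv_neg_one]
  ring

end S19

/-- a function `ζ : Λ → ℚ(q)ˣ` satisfying
`ζ(μ + α_i) = -q^{(α_i, μ+α_i) - (α_{-i}, μ)} ζ(μ)` and
`ζ(μ + α_{-i}) = -q^{(α_{-i}, μ+α_{-i}) - (α_i, μ) - 1} ζ(μ)` for all `μ ∈ Λ`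
and all `i ∈ I^ι` (a set of positive indices), and in the odd case also
`ζ(μ + α_0) = -q ζ(μ)`, exists. -/
theorem stmt_19 (S : Set ℚ) (hS : ∀ i ∈ S, 0 < i) (odd : Bool) :
    ∃ ζ : Lam → Kq, (∀ μ, ζ μ ≠ 0) ∧
      (∀ μ : Lam, ∀ i ∈ S,
        ζ (μ + alpha i) =
          -(RatFunc.X : Kq) ^ (Bform (alpha i) (μ + alpha i) - Bform (alpha (-i)) μ) *
            ζ μ ∧
        ζ (μ + alpha (-i)) =
          -(RatFunc.X : Kq) ^
              (Bform (alpha (-i)) (μ + alpha (-i)) - Bform (alpha i) μ - 1) * ζ μ) ∧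
      (odd = true → ∀ μ : Lam, ζ (μ + alpha 0) = -(RatFunc.X : Kq) * ζ μ) := by
  refine ⟨S19.zeta, S19.zeta_ne_zero, fun μ i hi => ?_, fun _ μ => ?_⟩
  · have hpos := hS i hi
    exact ⟨S19.zeta_step μ (alpha i) _ (S19.Efun_step_pos μ i hpos) (S19.tfun_alpha i),
      S19.zeta_step μ (alpha (-i)) _ (S19.Efun_step_neg μ i hpos) (S19.tfun_alpha (-i))⟩
  · have h := S19.zeta_step μ (alpha 0) 1 (S19.Efun_step_zero μ) (S19.tfun_alpha 0)
    rw [h, zpow_one]
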